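/- Let X_1,...,X_M be independent binomial random variables, X_i ~ Bin(m_i, p_i) with p_i ∈ (0,1), let n = ∑m_i and k ∈ {1,...,n-1}, and let (c_1,...,c_M) ∈ (0,1)^M satisfy ((1-c_i)/c_i)(p_i/(1-p_i)) = ((1-c_j)/c_j)(p_j/(1-p_j)) for all i,j and ∑ c_i m_i = k. Then for every i and every positive integer r, P(|X_i - c_i m_i| ≥ Mr | ∑_j X_j = k) ≤ 2M e^{-(M-1)r²/n}. -/

import Mathlib

open Finset
open scoped BigOperators Classical

noncomputable section

set_option maxHeartbeats 1000000

/-- Probability mass function of a binomial random variable with parameters `m`, `p`. -/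
def binomPMF (m : ℕ) (p : ℝ) (j : ℕ) : ℝ :=
  (m.choose j : ℝ) * p ^ j * (1 - p) ^ (m - j)

/-- Probability that independent binomials `X i ~ Bin(m i, p i)` realize an event `A`. -/
def jointPr {M : ℕ} (m : Fin M → ℕ) (p : Fin M → ℝ) (A : (Fin M → ℕ) → Prop) : ℝ :=
  ∑ ℓ ∈ Fintype.piFinset (fun i => Finset.range (m i + 1)),
    if A ℓ then ∏ i, binomPMF (m i) (p i) (ℓ i) else 0

lemma binomPMF_nonneg {m j : ℕ} {p : ℝ} (h0 : 0 ≤ p) (h1 : p ≤ 1) : 0 ≤ binomPMF m p j := by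
  have h2 : (0:ℝ) ≤ 1 - p := by linarith
  unfold binomPMF; positivity

lemma binomPMF_pos {m j : ℕ} {p : ℝ} (h0 : 0 < p) (h1 : p < 1) (hj : j ≤ m) :
    0 < binomPMF m p j := by
  have h2 : (0:ℝ) < 1 - p := by linarith
  have h3 : (0:ℝ) < (m.choose j : ℝ) := by exact_mod_cast Nat.choose_pos hj
  unfold binomPMF; positivity

lemma binom_up {m j : ℕ} (hj : j < m) (p : ℝ) :
    binomPMF m p (j+1) * (((j:ℝ)+1) * (1-p)) = binomPMF m p j * (((m:ℝ) - j) * p) := by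
  have h2 := Nat.choose_succ_right_eq m j
  have h3 : ((m.choose (j+1)):ℝ) * ((j:ℝ)+1) = (m.choose j : ℝ) * ((m:ℝ) - (j:ℝ)) := by
    have := congrArg (fun n : ℕ => (n:ℝ)) h2
    push_cast [Nat.cast_sub hj.le] at this
    simpa using this
  have h1 : m - j = (m - (j+1)) + 1 := by omega
  unfold binomPMF
  rw [h1, pow_succ, pow_succ]
  linear_combination (p ^ j * p * (1 - p) ^ (m - (j + 1)) * (1-p)) * h3

/-- One-step shift inequality. -/
lemma step_ineq {M : ℕ} (m : Fin M → ℕ) (p c : Fin M → ℝ)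
    (hp : ∀ i, 0 < p i ∧ p i < 1) (hc : ∀ i, 0 < c i ∧ c i < 1)
    (hsys : ∀ i j : Fin M,
      (1 - c i) / c i * (p i / (1 - p i)) = (1 - c j) / c j * (p j / (1 - p j)))
    (u v : Fin M) (huv : u ≠ v) (q Q : Fin M → ℕ) (hbox : ∀ l, q l ≤ m l)
    (h1 : 1 ≤ q u) (h2 : q v + 1 ≤ m v)
    (hQu : Q u = q u - 1) (hQv : Q v = q v + 1) (hQo : ∀ l, l ≠ u → l ≠ v → Q l = q l)
    (α β : ℝ) (hα0 : 0 ≤ α) (hβ0 : 0 ≤ β)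
    (hα : c u * (m u) + α + 1 ≤ (q u : ℝ)) (hβ : (q v : ℝ) + 1 ≤ c v * (m v) - β) :
    ((1 + α/(c u * (1 - c u) * (m u))) * (1 + β/(c v * (1 - c v) * (m v)))) *
      ∏ l, binomPMF (m l) (p l) (q l) ≤ ∏ l, binomPMF (m l) (p l) (Q l) := by
  obtain ⟨hpu0, hpu1⟩ := hp u
  obtain ⟨hpv0, hpv1⟩ := hp v
  obtain ⟨hcu0, hcu1⟩ := hc u
  obtain ⟨hcv0, hcv1⟩ := hc v
  have hmu : 1 ≤ m u := le_trans h1 (hbox u)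
  have hmv : 1 ≤ m v := le_trans (Nat.le_add_left 1 (q v)) h2
  have hmuR : (1:ℝ) ≤ (m u : ℝ) := by exact_mod_cast hmu
  have hmvR : (1:ℝ) ≤ (m v : ℝ) := by exact_mod_cast hmv
  have hAu : (0:ℝ) < c u * (1 - c u) * (m u) :=
    mul_pos (mul_pos hcu0 (by linarith)) (by linarith)
  have hAv : (0:ℝ) < c v * (1 - c v) * (m v) :=
    mul_pos (mul_pos hcv0 (by linarith)) (by linarith)
  have hquM : (q u : ℝ) ≤ (m u : ℝ) := by exact_mod_cast hbox u
  have hqvM : (q v : ℝ) + 1 ≤ (m v : ℝ) := by exact_mod_cast h2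
  have hqu0 : (0:ℝ) ≤ (q u : ℝ) := Nat.cast_nonneg _
  have hqumu : q u ≤ m u := hbox u
  have hqv0 : (0:ℝ) ≤ (q v : ℝ) := Nat.cast_nonneg _
  -- B1
  have B1 : (1 + α/(c u * (1 - c u) * (m u))) * (((m u:ℝ) - (q u:ℝ) + 1) * c u)
      ≤ (q u:ℝ) * (1 - c u) := by
    have hrw : (1 + α/(c u * (1 - c u) * (m u)))
        = ((c u * (1 - c u) * (m u)) + α)/(c u * (1 - c u) * (m u)) := by field_simp [(show (0:ℝ) < 1 - c u by linarith).ne']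
    rw [hrw, div_mul_eq_mul_div, div_le_iff₀ hAu]
    have f1 : ((m u:ℝ) - (q u:ℝ) + 1) * c u ≤ (c u * (1 - c u) * (m u)) - c u * α := by
      have g1 : (m u:ℝ) - (q u:ℝ) + 1 ≤ (1 - c u) * (m u) - α := by linarith
      nlinarith [mul_le_mul_of_nonneg_right g1 hcu0.le]
    have f2 : (c u * (1 - c u) * (m u)) + (1 - c u)*α + (1 - c u) ≤ (q u:ℝ) * (1 - c u) := by
      nlinarith [mul_le_mul_of_nonneg_right hα (show (0:ℝ) ≤ 1 - c u by linarith)]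
    nlinarith [mul_le_mul_of_nonneg_left f1
        (show (0:ℝ) ≤ (c u * (1 - c u) * (m u)) + α by linarith),
      mul_le_mul_of_nonneg_right f2 hAu.le,
      mul_nonneg (mul_nonneg hcu0.le hα0) hα0,
      mul_pos (show (0:ℝ) < 1 - c u by linarith) hAu]
  -- B2
  have B2 : (1 + β/(c v * (1 - c v) * (m v))) * (((q v:ℝ) + 1) * (1 - c v))
      ≤ ((m v:ℝ) - (q v:ℝ)) * c v := by
    have hrw : (1 + β/(c v * (1 - c v) * (m v)))
        = ((c v * (1 - c v) * (m v)) + β)/(c v * (1 - c v) * (m v)) := by field_simp [(show (0:ℝ) < 1 - c v by linarith).ne']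
    rw [hrw, div_mul_eq_mul_div, div_le_iff₀ hAv]
    have f1 : ((q v:ℝ) + 1) * (1 - c v) ≤ (c v * (1 - c v) * (m v)) - (1 - c v) * β := by
      have g1 : (q v:ℝ) + 1 ≤ c v * (m v) - β := hβ
      nlinarith [mul_le_mul_of_nonneg_right g1 (show (0:ℝ) ≤ 1 - c v by linarith)]
    have f2 : (c v * (1 - c v) * (m v)) + c v * β + c v ≤ ((m v:ℝ) - (q v:ℝ)) * c v := by
      have g2 : (1 - c v) * (m v) + β + 1 ≤ (m v:ℝ) - (q v:ℝ) := by linarith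
      nlinarith [mul_le_mul_of_nonneg_right g2 hcv0.le]
    nlinarith [mul_le_mul_of_nonneg_left f1
        (show (0:ℝ) ≤ (c v * (1 - c v) * (m v)) + β by linarith),
      mul_le_mul_of_nonneg_right f2 hAv.le,
      mul_nonneg (mul_nonneg (show (0:ℝ) ≤ 1 - c v by linarith) hβ0) hβ0,
      mul_pos hcv0 hAv]
  -- identity from the system
  have I : (1 - c u) * p u * (c v * (1 - p v)) = (1 - c v) * p v * (c u * (1 - p u)) := by
    have h := hsys u v
    rw [div_mul_div_comm, div_mul_div_comm,
      div_eq_div_iff (mul_pos hcu0 (by linarith : (0:ℝ) < 1 - p u)).ne'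
        (mul_pos hcv0 (by linarith : (0:ℝ) < 1 - p v)).ne'] at h
    exact h
  have hB2l : (0:ℝ) ≤ (1 + β/(c v * (1 - c v) * (m v))) * (((q v:ℝ) + 1) * (1 - c v)) := by
    have : (0:ℝ) ≤ β/(c v * (1 - c v) * (m v)) := div_nonneg hβ0 hAv.le
    have h1cv : (0:ℝ) ≤ 1 - c v := by linarith
    have : (0:ℝ) ≤ ((q v:ℝ) + 1) * (1 - c v) := mul_nonneg (by linarith) h1cv
    nlinarith
  have hB1r : (0:ℝ) ≤ (q u:ℝ) * (1 - c u) := mul_nonneg hqu0 (by linarith)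
  -- CORE
  have CORE : ((1 + α/(c u * (1 - c u) * (m u))) * (1 + β/(c v * (1 - c v) * (m v)))) *
      ((((m u:ℝ) - (q u:ℝ) + 1) * p u) * ((((q v:ℝ)+1)) * (1 - p v)))
      ≤ ((q u:ℝ) * (1 - p u)) * (((m v:ℝ) - (q v:ℝ)) * p v) := by
    have hpos : (0:ℝ) < c u * (1 - c v) := mul_pos hcu0 (by linarith)
    apply le_of_mul_le_mul_right _ hpos
    have P := mul_le_mul B1 B2 hB2l hB1r
    have hpupv : (0:ℝ) ≤ p u * (1 - p v) := mul_nonneg hpu0.le (by linarith)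
    calc ((1 + α/(c u * (1 - c u) * (m u))) * (1 + β/(c v * (1 - c v) * (m v)))) *
        ((((m u:ℝ) - (q u:ℝ) + 1) * p u) * ((((q v:ℝ)+1)) * (1 - p v))) * (c u * (1 - c v))
        = (((1 + α/(c u * (1 - c u) * (m u))) * (((m u:ℝ) - (q u:ℝ) + 1) * c u)) *
            ((1 + β/(c v * (1 - c v) * (m v))) * (((q v:ℝ) + 1) * (1 - c v)))) *
            (p u * (1 - p v)) := by ring
      _ ≤ (((q u:ℝ) * (1 - c u)) * (((m v:ℝ) - (q v:ℝ)) * c v)) * (p u * (1 - p v)) :=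
          mul_le_mul_of_nonneg_right P hpupv
      _ = ((q u:ℝ) * (1 - p u)) * (((m v:ℝ) - (q v:ℝ)) * p v) * (c u * (1 - c v)) := by
          linear_combination ((q u:ℝ) * ((m v:ℝ) - (q v:ℝ))) * I
  -- product identities
  have E1 : binomPMF (m u) (p u) (q u) * ((q u:ℝ) * (1 - p u))
      = binomPMF (m u) (p u) (q u - 1) * (((m u:ℝ) - (q u:ℝ) + 1) * p u) := by
    have hc1 : q u - 1 + 1 = q u := by omega
    have hc2 : ((q u - 1 : ℕ):ℝ) = (q u:ℝ) - 1 := by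
      rw [Nat.cast_sub h1]; norm_num
    have e1 := binom_up (show q u - 1 < m u by omega) (p u)
    rw [hc1, hc2] at e1
    linear_combination e1
  have E2 : binomPMF (m v) (p v) (q v + 1) * (((q v:ℝ) + 1) * (1 - p v))
      = binomPMF (m v) (p v) (q v) * (((m v:ℝ) - (q v:ℝ)) * p v) :=
    binom_up (show q v < m v by omega) (p v)
  -- assemble
  have hvmem : v ∈ Finset.univ.erase u := Finset.mem_erase.2 ⟨Ne.symm huv, Finset.mem_univ v⟩
  have hsplit : ∀ (f : Fin M → ℕ), ∏ l, binomPMF (m l) (p l) (f l) =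
      binomPMF (m u) (p u) (f u) * binomPMF (m v) (p v) (f v) *
        ∏ l ∈ (Finset.univ.erase u).erase v, binomPMF (m l) (p l) (f l) := by
    intro f
    rw [← Finset.mul_prod_erase Finset.univ _ (Finset.mem_univ u),
      ← Finset.mul_prod_erase _ _ hvmem, mul_assoc]
  have hrest : ∏ l ∈ (Finset.univ.erase u).erase v, binomPMF (m l) (p l) (Q l)
      = ∏ l ∈ (Finset.univ.erase u).erase v, binomPMF (m l) (p l) (q l) := by
    apply Finset.prod_congr rfl
    intro l hl
    obtain ⟨hlv, hlu'⟩ := Finset.mem_erase.1 hl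
    obtain ⟨hlu, -⟩ := Finset.mem_erase.1 hlu'
    rw [hQo l hlu hlv]
  have hRnn : 0 ≤ ∏ l ∈ (Finset.univ.erase u).erase v, binomPMF (m l) (p l) (q l) :=
    Finset.prod_nonneg (fun l _ => binomPMF_nonneg (hp l).1.le (hp l).2.le)
  have key2 : ((1 + α/(c u * (1 - c u) * (m u))) * (1 + β/(c v * (1 - c v) * (m v)))) *
      (binomPMF (m u) (p u) (q u) * binomPMF (m v) (p v) (q v))
      ≤ binomPMF (m u) (p u) (q u - 1) * binomPMF (m v) (p v) (q v + 1) := by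
    have hY1 : (0:ℝ) < ((m u:ℝ) - (q u:ℝ) + 1) * p u := by
      apply mul_pos (by linarith) hpu0
    have hY2 : (0:ℝ) < ((q v:ℝ) + 1) * (1 - p v) := by
      apply mul_pos (by linarith) (by linarith)
    have hFu : 0 ≤ binomPMF (m u) (p u) (q u) := binomPMF_nonneg hpu0.le hpu1.le
    have hFv : 0 ≤ binomPMF (m v) (p v) (q v) := binomPMF_nonneg hpv0.le hpv1.le
    apply le_of_mul_le_mul_right _ (mul_pos hY1 hY2)
    calc ((1 + α/(c u * (1 - c u) * (m u))) * (1 + β/(c v * (1 - c v) * (m v)))) *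
        (binomPMF (m u) (p u) (q u) * binomPMF (m v) (p v) (q v)) *
        ((((m u:ℝ) - (q u:ℝ) + 1) * p u) * (((q v:ℝ) + 1) * (1 - p v)))
        = (((1 + α/(c u * (1 - c u) * (m u))) * (1 + β/(c v * (1 - c v) * (m v)))) *
            ((((m u:ℝ) - (q u:ℝ) + 1) * p u) * (((q v:ℝ) + 1) * (1 - p v)))) *
            (binomPMF (m u) (p u) (q u) * binomPMF (m v) (p v) (q v)) := by ring
      _ ≤ (((q u:ℝ) * (1 - p u)) * (((m v:ℝ) - (q v:ℝ)) * p v)) *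
            (binomPMF (m u) (p u) (q u) * binomPMF (m v) (p v) (q v)) :=
          mul_le_mul_of_nonneg_right CORE (mul_nonneg hFu hFv)
      _ = (binomPMF (m u) (p u) (q u) * ((q u:ℝ) * (1 - p u))) *
            (binomPMF (m v) (p v) (q v) * (((m v:ℝ) - (q v:ℝ)) * p v)) := by ring
      _ = (binomPMF (m u) (p u) (q u - 1) * (((m u:ℝ) - (q u:ℝ) + 1) * p u)) *
            (binomPMF (m v) (p v) (q v + 1) * (((q v:ℝ) + 1) * (1 - p v))) := by
          rw [E1, E2]
      _ = binomPMF (m u) (p u) (q u - 1) * binomPMF (m v) (p v) (q v + 1) *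
            ((((m u:ℝ) - (q u:ℝ) + 1) * p u) * (((q v:ℝ) + 1) * (1 - p v))) := by ring
  rw [hsplit q, hsplit Q, hQu, hQv, hrest]
  calc ((1 + α/(c u * (1 - c u) * (m u))) * (1 + β/(c v * (1 - c v) * (m v)))) *
      (binomPMF (m u) (p u) (q u) * binomPMF (m v) (p v) (q v) *
        ∏ l ∈ (Finset.univ.erase u).erase v, binomPMF (m l) (p l) (q l))
      = (((1 + α/(c u * (1 - c u) * (m u))) * (1 + β/(c v * (1 - c v) * (m v)))) *
          (binomPMF (m u) (p u) (q u) * binomPMF (m v) (p v) (q v))) *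
          ∏ l ∈ (Finset.univ.erase u).erase v, binomPMF (m l) (p l) (q l) := by ring
    _ ≤ (binomPMF (m u) (p u) (q u - 1) * binomPMF (m v) (p v) (q v + 1)) *
          ∏ l ∈ (Finset.univ.erase u).erase v, binomPMF (m l) (p l) (q l) :=
        mul_le_mul_of_nonneg_right key2 hRnn

/-- Iterated shift bound for one tail. -/
lemma tail_bound {M : ℕ} (m : Fin M → ℕ) (p c : Fin M → ℝ)
    (hp : ∀ i, 0 < p i ∧ p i < 1) (hc : ∀ i, 0 < c i ∧ c i < 1)
    (hsys : ∀ i j : Fin M,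
      (1 - c i) / c i * (p i / (1 - p i)) = (1 - c j) / c j * (p j / (1 - p j)))
    (k r : ℕ) (hr : 0 < r)
    (u v : Fin M) (huv : u ≠ v) (α β : ℝ) (hα0 : 0 ≤ α) (hβ0 : 0 ≤ β) :
    ((1 + α/(c u * (1 - c u) * (m u))) * (1 + β/(c v * (1 - c v) * (m v))))^r *
      ∑ ℓ ∈ (Fintype.piFinset (fun i => Finset.range (m i + 1))).filter
        (fun ℓ => (∑ j, ℓ j = k) ∧ (c u * (m u) + α + r ≤ (ℓ u:ℝ)) ∧
          ((ℓ v:ℝ) + r ≤ c v * (m v) - β)),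
        ∏ l, binomPMF (m l) (p l) (ℓ l)
    ≤ ∑ ℓ ∈ (Fintype.piFinset (fun i => Finset.range (m i + 1))).filter
        (fun ℓ => ∑ j, ℓ j = k),
        ∏ l, binomPMF (m l) (p l) (ℓ l) := by
  classical
  set S := (Fintype.piFinset (fun i : Fin M => Finset.range (m i + 1))) with hSdef
  set G := ((1 + α/(c u * (1 - c u) * (m u))) * (1 + β/(c v * (1 - c v) * (m v)))) with hG
  set C := S.filter (fun ℓ => (∑ j, ℓ j = k) ∧ (c u * (m u) + α + r ≤ (ℓ u:ℝ)) ∧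
          ((ℓ v:ℝ) + r ≤ c v * (m v) - β)) with hC
  have hG0 : 0 ≤ G := by
    have h1 : 0 ≤ α/(c u * (1 - c u) * (m u)) := by
      apply div_nonneg hα0
      have g1 := (hc u).1; have g2 := (hc u).2
      have : (0:ℝ) ≤ 1 - c u := by linarith
      positivity
    have h2 : 0 ≤ β/(c v * (1 - c v) * (m v)) := by
      apply div_nonneg hβ0
      have g1 := (hc v).1; have g2 := (hc v).2
      have : (0:ℝ) ≤ 1 - c v := by linarith
      positivity
    rw [hG]; nlinarith
  have hWnn : ∀ ℓ : Fin M → ℕ, 0 ≤ ∏ l, binomPMF (m l) (p l) (ℓ l) :=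
    fun ℓ => Finset.prod_nonneg (fun l _ => binomPMF_nonneg (hp l).1.le (hp l).2.le)
  set shift : (Fin M → ℕ) → (Fin M → ℕ) :=
    fun ℓ l => if l = u then ℓ u - r else if l = v then ℓ v + r else ℓ l with hshift
  -- basic facts about members of C
  have facts : ∀ ℓ ∈ C, (∀ l, ℓ l ≤ m l) ∧ r ≤ ℓ u ∧ ℓ v + r ≤ m v := by
    intro ℓ hℓ
    have hmem := Finset.mem_filter.1 hℓ
    have hℓS := hmem.1
    obtain ⟨hsum, hu, hv⟩ := hmem.2
    have hbox : ∀ l, ℓ l ≤ m l := by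
      intro l
      have := (Fintype.mem_piFinset.1 hℓS) l
      simpa [Finset.mem_range, Nat.lt_succ_iff] using this
    have hcu := hc u
    have hcv := hc v
    have hmumR : (0:ℝ) ≤ c u * (m u) := mul_nonneg (hcu.1.le) (Nat.cast_nonneg _)
    have hruR : (r:ℝ) ≤ (ℓ u : ℝ) := by linarith
    have hru : r ≤ ℓ u := by exact_mod_cast hruR
    have hr1 : (1:ℝ) ≤ (r:ℝ) := by exact_mod_cast hr
    have hmv0 : (1:ℝ) ≤ c v * (m v) := by
      have h0 : (0:ℝ) ≤ (ℓ v:ℝ) := Nat.cast_nonneg _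
      linarith
    have hmv1 : (0:ℝ) < (m v : ℝ) := by nlinarith [hcv.2, hcv.1]
    have hmvR : c v * (m v) < (m v:ℝ) := by nlinarith [hcv.2, hcv.1]
    have hrvR : ((ℓ v + r : ℕ):ℝ) < (m v:ℝ) := by push_cast; linarith
    have hrv : ℓ v + r ≤ m v := le_of_lt (by exact_mod_cast hrvR)
    exact ⟨hbox, hru, hrv⟩
  -- key per-element estimate
  have key : ∀ ℓ ∈ C, G^r * ∏ l, binomPMF (m l) (p l) (ℓ l)
      ≤ ∏ l, binomPMF (m l) (p l) (shift ℓ l) := by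
    intro ℓ hℓ
    obtain ⟨hbox, hru, hrv⟩ := facts ℓ hℓ
    obtain ⟨hsum, hu, hv⟩ := (Finset.mem_filter.1 hℓ).2
    have claim : ∀ t, t ≤ r → G^t * ∏ l, binomPMF (m l) (p l) (ℓ l)
        ≤ ∏ l, binomPMF (m l) (p l)
            (if l = u then ℓ u - t else if l = v then ℓ v + t else ℓ l) := by
      intro t
      induction t with
      | zero =>
        intro _
        have heq : ∀ l : Fin M, (if l = u then ℓ u - 0 else if l = v then ℓ v + 0 else ℓ l) = ℓ l := by
          intro l
          by_cases h1 : l = u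
          · subst h1; simp
          · by_cases h2 : l = v
            · subst h2; simp [h1]
            · simp [h1, h2]
        simp only [heq, pow_zero, one_mul]
        exact le_refl _
      | succ t ih =>
        intro ht
        have ht' : t ≤ r := by omega
        have hq := ih ht'
        have hqu : (if u = u then ℓ u - t else if u = v then ℓ v + t else ℓ u) = ℓ u - t := by simp
        have hqv : (if v = u then ℓ u - t else if v = v then ℓ v + t else ℓ v) = ℓ v + t := by
          simp [Ne.symm huv]
        have hqbox : ∀ l, (if l = u then ℓ u - t else if l = v then ℓ v + t else ℓ l) ≤ m l := by
          intro l
          by_cases h1 : l = u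
          · subst h1; rw [if_pos rfl]; exact le_trans (Nat.sub_le _ _) (hbox _)
          · by_cases h2 : l = v
            · subst h2; rw [if_neg h1, if_pos rfl]; omega
            · rw [if_neg h1, if_neg h2]; exact hbox l
        have htr : (t:ℝ) + 1 ≤ (r:ℝ) := by exact_mod_cast ht
        have hlur : ((ℓ u - t : ℕ):ℝ) = (ℓ u:ℝ) - t := by
          rw [Nat.cast_sub (le_trans ht' hru)]
        have h1' : 1 ≤ (if u = u then ℓ u - t else if u = v then ℓ v + t else ℓ u) := by
          rw [hqu]; omega
        have h2' : (if v = u then ℓ u - t else if v = v then ℓ v + t else ℓ v) + 1 ≤ m v := by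
          rw [hqv]; omega
        have hα1 : c u * (m u) + α + 1
            ≤ (((if u = u then ℓ u - t else if u = v then ℓ v + t else ℓ u) : ℕ) : ℝ) := by
          rw [hqu, hlur]; linarith
        have hβ1 : (((if v = u then ℓ u - t else if v = v then ℓ v + t else ℓ v) : ℕ) : ℝ) + 1
            ≤ c v * (m v) - β := by
          rw [hqv]; push_cast; linarith
        have hstep := step_ineq m p c hp hc hsys u v huv
          (fun l => if l = u then ℓ u - t else if l = v then ℓ v + t else ℓ l)
          (fun l => if l = u then ℓ u - (t+1) else if l = v then ℓ v + (t+1) else ℓ l)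
          hqbox h1' h2'
          (by simp; omega)
          (by simp [Ne.symm huv]; omega)
          (fun l hl1 hl2 => by simp only [if_neg hl1, if_neg hl2])
          α β hα0 hβ0 hα1 hβ1
        calc G^(t+1) * ∏ l, binomPMF (m l) (p l) (ℓ l)
            = G * (G^t * ∏ l, binomPMF (m l) (p l) (ℓ l)) := by ring
          _ ≤ G * ∏ l, binomPMF (m l) (p l)
                (if l = u then ℓ u - t else if l = v then ℓ v + t else ℓ l) :=
              mul_le_mul_of_nonneg_left hq hG0
          _ ≤ ∏ l, binomPMF (m l) (p l)
                (if l = u then ℓ u - (t+1) else if l = v then ℓ v + (t+1) else ℓ l) := hstep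
    exact claim r le_rfl
  -- injectivity of the shift on C
  have hinj : ∀ x ∈ C, ∀ y ∈ C, shift x = shift y → x = y := by
    intro x hx y hy hxy
    obtain ⟨-, hxu, hxv⟩ := facts x hx
    obtain ⟨-, hyu, hyv⟩ := facts y hy
    funext l
    have h := congrFun hxy l
    by_cases h1 : l = u
    · subst h1
      simp [hshift] at h
      omega
    · by_cases h2 : l = v
      · subst h2
        simp [hshift, Ne.symm huv] at h
        omega
      · simpa [hshift, h1, h2] using h
  -- image is inside the slice
  have hvmem : v ∈ Finset.univ.erase u := Finset.mem_erase.2 ⟨Ne.symm huv, Finset.mem_univ v⟩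
  have hsplit : ∀ f : Fin M → ℕ,
      ∑ l, f l = f u + (f v + ∑ l ∈ (Finset.univ.erase u).erase v, f l) := by
    intro f
    rw [← Finset.add_sum_erase _ f (Finset.mem_univ u), ← Finset.add_sum_erase _ f hvmem]
  have himg : C.image shift ⊆ S.filter (fun ℓ => ∑ j, ℓ j = k) := by
    intro y hy
    obtain ⟨ℓ, hℓ, rfl⟩ := Finset.mem_image.1 hy
    obtain ⟨hbox, hru, hrv⟩ := facts ℓ hℓ
    have hsum : ∑ j, ℓ j = k := ((Finset.mem_filter.1 hℓ).2).1
    refine Finset.mem_filter.2 ⟨?_, ?_⟩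
    · refine Fintype.mem_piFinset.2 (fun l => ?_)
      rw [Finset.mem_range, Nat.lt_succ_iff]
      by_cases h1 : l = u
      · subst h1; simp only [hshift, if_pos rfl]; exact le_trans (Nat.sub_le _ _) (hbox _)
      · by_cases h2 : l = v
        · subst h2; simp only [hshift, if_neg h1, if_pos rfl]; exact hrv
        · simp only [hshift, if_neg h1, if_neg h2]; exact hbox l
    · have hrest : ∑ l ∈ (Finset.univ.erase u).erase v, shift ℓ l
          = ∑ l ∈ (Finset.univ.erase u).erase v, ℓ l := by
        apply Finset.sum_congr rfl
        intro l hl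
        obtain ⟨hlv, hlu'⟩ := Finset.mem_erase.1 hl
        obtain ⟨hlu, -⟩ := Finset.mem_erase.1 hlu'
        simp [hshift, hlu, hlv]
      have h1 : shift ℓ u = ℓ u - r := by simp [hshift]
      have h2 : shift ℓ v = ℓ v + r := by simp [hshift, Ne.symm huv]
      rw [hsplit (shift ℓ), h1, h2, hrest]
      rw [hsplit ℓ] at hsum
      omega
  rw [Finset.mul_sum]
  calc ∑ ℓ ∈ C, G^r * ∏ l, binomPMF (m l) (p l) (ℓ l)
      ≤ ∑ ℓ ∈ C, ∏ l, binomPMF (m l) (p l) (shift ℓ l) := Finset.sum_le_sum key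
    _ = ∑ y ∈ C.image shift, ∏ l, binomPMF (m l) (p l) (y l) := by
        rw [Finset.sum_image hinj]
    _ ≤ ∑ ℓ ∈ S.filter (fun ℓ => ∑ j, ℓ j = k), ∏ l, binomPMF (m l) (p l) (ℓ l) :=
        Finset.sum_le_sum_of_subset_of_nonneg himg (fun y _ _ => hWnn y)

/-- concentration of the blocks around the centres `c i * m i` given
`∑ X_j = k`. -/
theorem stmt11 {M : ℕ} (m : Fin M → ℕ) (p c : Fin M → ℝ)
    (hp : ∀ i, 0 < p i ∧ p i < 1) (hc : ∀ i, 0 < c i ∧ c i < 1)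
    (hsys : ∀ i j : Fin M,
      (1 - c i) / c i * (p i / (1 - p i)) = (1 - c j) / c j * (p j / (1 - p j)))
    (k : ℕ) (hk1 : 1 ≤ k) (hk2 : k ≤ (∑ j, m j) - 1)
    (hcs : ∑ i, c i * (m i : ℝ) = (k : ℝ))
    (hpos : 0 < jointPr m p (fun ℓ => ∑ j, ℓ j = k))
    (i : Fin M) (r : ℕ) (hr : 0 < r) :
    jointPr m p (fun ℓ => (M : ℝ) * r ≤ |(ℓ i : ℝ) - c i * (m i : ℝ)| ∧ ∑ j, ℓ j = k)
        / jointPr m p (fun ℓ => ∑ j, ℓ j = k)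
      ≤ 2 * M * Real.exp (-((M : ℝ) - 1) * (r : ℝ) ^ 2 / ((∑ j, m j : ℕ) : ℝ)) := by
  classical
  have hMpos : 0 < M := i.pos
  have hM1R : (1:ℝ) ≤ (M:ℝ) := by exact_mod_cast hMpos
  have hr1R : (1:ℝ) ≤ (r:ℝ) := by exact_mod_cast hr
  set n : ℕ := ∑ j, m j with hn
  set a : ℝ := ((M:ℝ) - 1) * (r:ℝ) with ha
  have ha0 : 0 ≤ a := by rw [ha]; nlinarith
  set S := (Fintype.piFinset (fun i : Fin M => Finset.range (m i + 1))) with hSdef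
  set W : (Fin M → ℕ) → ℝ := fun ℓ => ∏ l, binomPMF (m l) (p l) (ℓ l) with hW
  have hWnn : ∀ ℓ, 0 ≤ W ℓ :=
    fun ℓ => Finset.prod_nonneg (fun l _ => binomPMF_nonneg (hp l).1.le (hp l).2.le)
  set E : ℝ := Real.exp (-(((M:ℝ) - 1) * (r:ℝ)^2 / (n:ℝ))) with hE
  have hE0 : 0 < E := Real.exp_pos _
  set D : ℝ := ∑ ℓ ∈ S.filter (fun ℓ => ∑ j, ℓ j = k), W ℓ with hD
  have hDeq : jointPr m p (fun ℓ => ∑ j, ℓ j = k) = D := by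
    rw [hD, jointPr, Finset.sum_filter]
    refine Finset.sum_congr rfl fun ℓ _ => ?_
    by_cases h : ∑ j, ℓ j = k <;> simp [h, hW]
  have hDpos : 0 < D := by rw [← hDeq]; exact hpos
  -- the two tails
  set Pp : Fin M → (Fin M → ℕ) → Prop := fun j ℓ => (∑ j', ℓ j' = k) ∧
      (c i * (m i) + a + r ≤ (ℓ i:ℝ)) ∧ ((ℓ j:ℝ) + r ≤ c j * (m j) - 0) with hPp
  set Pm : Fin M → (Fin M → ℕ) → Prop := fun j ℓ => (∑ j', ℓ j' = k) ∧
      (c j * (m j) + 0 + r ≤ (ℓ j:ℝ)) ∧ ((ℓ i:ℝ) + r ≤ c i * (m i) - a) with hPm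
  -- box facts
  have hbox : ∀ ℓ ∈ S, ∀ l, ℓ l ≤ m l := by
    intro ℓ hℓ l
    have := (Fintype.mem_piFinset.1 hℓ) l
    simpa [Finset.mem_range, Nat.lt_succ_iff] using this
  have hmc : ∀ l : Fin M, (0:ℝ) ≤ c l * (m l) := by
    intro l
    have h1 : (0:ℝ) ≤ ((m l : ℕ):ℝ) := Nat.cast_nonneg _
    exact mul_nonneg (hc l).1.le h1
  have hcm_le : ∀ l : Fin M, c l * (m l) ≤ (m l:ℝ) := by
    intro l
    have h1 : (0:ℝ) ≤ ((m l : ℕ):ℝ) := Nat.cast_nonneg _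
    nlinarith [(hc l).2, (hc l).1]
  have hcard : (Finset.univ.erase i).card = M - 1 := by
    rw [Finset.card_erase_of_mem (Finset.mem_univ i), Finset.card_univ, Fintype.card_fin]
  have hM1cast : ((M - 1:ℕ):ℝ) = (M:ℝ) - 1 := by
    rw [Nat.cast_sub hMpos]; norm_num
  -- erase-sum identity
  have esum : ∀ ℓ : Fin M → ℕ, (∑ j', ℓ j' = k) →
      ∑ j' ∈ Finset.univ.erase i, (c j' * (m j') - (ℓ j':ℝ)) = (ℓ i:ℝ) - c i * (m i) := by
    intro ℓ hsum
    have hsumR : ∑ j', ((ℓ j':ℕ):ℝ) = (k:ℝ) := by exact_mod_cast congrArg (Nat.cast (R := ℝ)) hsum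
    have e0 : ∑ j', (c j' * (m j') - (ℓ j':ℝ)) = 0 := by
      rw [Finset.sum_sub_distrib, hcs, hsumR]; ring
    have e1 : (c i * (m i) - (ℓ i:ℝ)) + ∑ j' ∈ Finset.univ.erase i, (c j' * (m j') - (ℓ j':ℝ))
        = ∑ j', (c j' * (m j') - (ℓ j':ℝ)) :=
      Finset.add_sum_erase Finset.univ (fun j' => c j' * (m j') - (ℓ j':ℝ)) (Finset.mem_univ i)
    rw [e0] at e1
    linarith [e1]
  -- union (pointwise) bound
  have pointwise : ∀ ℓ ∈ S,
      (if ((M : ℝ) * r ≤ |(ℓ i : ℝ) - c i * (m i : ℝ)| ∧ ∑ j, ℓ j = k) then W ℓ else 0)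
      ≤ ∑ j ∈ Finset.univ.erase i,
          ((if Pp j ℓ then W ℓ else 0) + (if Pm j ℓ then W ℓ else 0)) := by
    intro ℓ hℓS
    have htermnn : ∀ j ∈ Finset.univ.erase i,
        0 ≤ (if Pp j ℓ then W ℓ else 0) + (if Pm j ℓ then W ℓ else 0) := by
      intro j _
      have h1 : 0 ≤ (if Pp j ℓ then W ℓ else 0) := by split <;> simp [hWnn ℓ]
      have h2 : 0 ≤ (if Pm j ℓ then W ℓ else 0) := by split <;> simp [hWnn ℓ]
      linarith
    by_cases hA : ((M : ℝ) * r ≤ |(ℓ i : ℝ) - c i * (m i : ℝ)| ∧ ∑ j, ℓ j = k)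
    · rw [if_pos hA]
      obtain ⟨habs, hsum⟩ := hA
      have har : a + r = (M:ℝ) * r := by rw [ha]; ring
      have hesum := esum ℓ hsum
      rcases le_abs.1 habs with hup | hdown
      · -- upper tail : find j with small ℓ j
        have hex : ∃ j ∈ Finset.univ.erase i, ((ℓ j:ℝ) + r ≤ c j * (m j) - 0) := by
          by_contra hcon
          push_neg at hcon
          have hb : ∀ j ∈ Finset.univ.erase i, (c j * (m j) - (ℓ j:ℝ)) ≤ (r:ℝ) := by
            intro j hj
            have := hcon j hj
            linarith
          have hsumle := Finset.sum_le_sum hb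
          rw [Finset.sum_const, hcard, nsmul_eq_mul, hM1cast, hesum] at hsumle
          nlinarith
        obtain ⟨j₀, hj₀, hj₀v⟩ := hex
        have hPpj : Pp j₀ ℓ := by
          refine ⟨hsum, ?_, hj₀v⟩
          linarith
        have hterm : W ℓ ≤ (if Pp j₀ ℓ then W ℓ else 0) + (if Pm j₀ ℓ then W ℓ else 0) := by
          rw [if_pos hPpj]
          have : 0 ≤ (if Pm j₀ ℓ then W ℓ else 0) := by split <;> simp [hWnn ℓ]
          linarith
        exact le_trans hterm (Finset.single_le_sum htermnn hj₀)
      · -- lower tail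
        have hex : ∃ j ∈ Finset.univ.erase i, (c j * (m j) + 0 + r ≤ (ℓ j:ℝ)) := by
          by_contra hcon
          push_neg at hcon
          have hb : ∀ j ∈ Finset.univ.erase i, -(r:ℝ) ≤ (c j * (m j) - (ℓ j:ℝ)) := by
            intro j hj
            have := hcon j hj
            linarith
          have hsumge := Finset.sum_le_sum hb
          rw [Finset.sum_const, hcard, nsmul_eq_mul, hM1cast, hesum] at hsumge
          nlinarith
        obtain ⟨j₀, hj₀, hj₀v⟩ := hex
        have hPmj : Pm j₀ ℓ := by
          refine ⟨hsum, hj₀v, ?_⟩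
          linarith
        have hterm : W ℓ ≤ (if Pp j₀ ℓ then W ℓ else 0) + (if Pm j₀ ℓ then W ℓ else 0) := by
          rw [if_pos hPmj]
          have : 0 ≤ (if Pp j₀ ℓ then W ℓ else 0) := by split <;> simp [hWnn ℓ]
          linarith
        exact le_trans hterm (Finset.single_le_sum htermnn hj₀)
    · rw [if_neg hA]
      exact Finset.sum_nonneg htermnn
  -- the per-tail bounds
  have tailp : ∀ j ∈ Finset.univ.erase i, ∑ ℓ ∈ S.filter (Pp j), W ℓ ≤ E * D := by
    intro j hj
    have hji : j ≠ i := (Finset.mem_erase.1 hj).1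
    rcases Finset.eq_empty_or_nonempty (S.filter (Pp j)) with hemp | ⟨ℓ₀, hℓ₀⟩
    · rw [hemp, Finset.sum_empty]; positivity
    · have hℓ₀S := (Finset.mem_filter.1 hℓ₀).1
      obtain ⟨hsum₀, hu₀, hv₀⟩ := (Finset.mem_filter.1 hℓ₀).2
      have hbox₀ := hbox ℓ₀ hℓ₀S
      have hmiR : (1:ℝ) ≤ (m i:ℝ) := by
        have h1 : (ℓ₀ i:ℝ) ≤ (m i:ℝ) := by exact_mod_cast hbox₀ i
        have h2 : (0:ℝ) ≤ (ℓ₀ i:ℝ) := Nat.cast_nonneg _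
        linarith [hu₀, ha0, hmc i, hr1R]
      set A : ℝ := c i * (1 - c i) * (m i) with hA
      have hA0 : 0 < A := by
        have := (hc i).1; have := (hc i).2
        have h01 : (0:ℝ) < 1 - c i := by linarith
        rw [hA]; positivity
      have hAm : A ≤ (m i:ℝ) := by
        have h4 : c i * (1 - c i) ≤ 1 := by nlinarith [sq_nonneg (c i - 1/2)]
        have h5 := mul_le_mul_of_nonneg_right h4 (le_trans zero_le_one hmiR)
        rw [hA]; linarith
      -- a + r ≤ n - m i
      have hesum := esum ℓ₀ hsum₀
      have hterm : ∀ j' ∈ Finset.univ.erase i, (c j' * (m j') - (ℓ₀ j':ℝ)) ≤ (m j':ℝ) := by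
        intro j' _
        have h0 : (0:ℝ) ≤ (ℓ₀ j':ℝ) := Nat.cast_nonneg _
        linarith [hcm_le j']
      have hsum_m : ∑ j' ∈ Finset.univ.erase i, ((m j':ℕ):ℝ) = (n:ℝ) - (m i:ℝ) := by
        rw [Finset.sum_erase_eq_sub (Finset.mem_univ i)]
        congr 1
        rw [hn]; push_cast; ring
      have hani : a + r ≤ (n:ℝ) - (m i:ℝ) := by
        have h1 := Finset.sum_le_sum hterm
        rw [hesum, hsum_m] at h1
        linarith
      have hnm : (m i : ℝ) ≤ (n:ℝ) := by linarith [hani, ha0, hr1R]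
      have hn0 : (0:ℝ) < (n:ℝ) := by linarith
      have han : A + a ≤ (n:ℝ) := by linarith
      have h1an : (0:ℝ) < 1 - a/(n:ℝ) := by
        rw [sub_pos, div_lt_one hn0]; linarith
      -- exp(a/n) ≤ 1 + a/A
      have hexp : Real.exp (a/(n:ℝ)) ≤ 1 + a/A := by
        have h := Real.add_one_le_exp (-(a/(n:ℝ)))
        rw [Real.exp_neg] at h
        have hepos : (0:ℝ) < Real.exp (a/(n:ℝ)) := Real.exp_pos _
        have h2 : 1 - a/(n:ℝ) ≤ (Real.exp (a/(n:ℝ)))⁻¹ := by linarith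
        have h3 : Real.exp (a/(n:ℝ)) ≤ (1 - a/(n:ℝ))⁻¹ := by
          rw [← inv_inv (Real.exp (a/(n:ℝ)))]
          exact inv_anti₀ h1an h2
        refine le_trans h3 ?_
        rw [← one_div, div_le_iff₀ h1an]
        have hkey : (1 + a/A) * (1 - a/(n:ℝ)) - 1 = a * ((n:ℝ) - A - a) / (A * (n:ℝ)) := by
          field_simp
          ring
        nlinarith [div_nonneg (mul_nonneg ha0 (by linarith : (0:ℝ) ≤ (n:ℝ) - A - a))
          (mul_nonneg hA0.le hn0.le), hkey]
      -- tail bound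
      have htb := tail_bound m p c hp hc hsys k r hr i j hji.symm a 0 ha0 le_rfl
      have hzero : (0:ℝ)/(c j * (1 - c j) * (m j)) = 0 := zero_div _
      rw [hzero, add_zero, mul_one] at htb
      -- conclude
      have hpow : Real.exp (((M:ℝ)-1) * (r:ℝ)^2 / (n:ℝ)) ≤ (1 + a/A)^r := by
        have h1 : Real.exp (((M:ℝ)-1) * (r:ℝ)^2 / (n:ℝ)) = (Real.exp (a/(n:ℝ)))^r := by
          rw [← Real.exp_nat_mul]
          congr 1
          rw [ha]; ring
        rw [h1]
        exact pow_le_pow_left₀ (Real.exp_pos _).le hexp r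
      have hwp0 : 0 ≤ ∑ ℓ ∈ S.filter (Pp j), W ℓ :=
        Finset.sum_nonneg (fun ℓ _ => hWnn ℓ)
      have hfin : (∑ ℓ ∈ S.filter (Pp j), W ℓ) * Real.exp (((M:ℝ)-1) * (r:ℝ)^2 / (n:ℝ)) ≤ D := by
        calc (∑ ℓ ∈ S.filter (Pp j), W ℓ) * Real.exp (((M:ℝ)-1) * (r:ℝ)^2 / (n:ℝ))
            ≤ (∑ ℓ ∈ S.filter (Pp j), W ℓ) * (1 + a/A)^r :=
              mul_le_mul_of_nonneg_left hpow hwp0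
          _ = (1 + a/A)^r * ∑ ℓ ∈ S.filter (Pp j), W ℓ := by ring
          _ ≤ D := htb
      have hexppos : (0:ℝ) < Real.exp (((M:ℝ)-1) * (r:ℝ)^2 / (n:ℝ)) := Real.exp_pos _
      calc ∑ ℓ ∈ S.filter (Pp j), W ℓ
          ≤ D / Real.exp (((M:ℝ)-1) * (r:ℝ)^2 / (n:ℝ)) := (le_div_iff₀ hexppos).2 hfin
        _ = E * D := by
            rw [hE, Real.exp_neg, inv_mul_eq_div]
  have tailm : ∀ j ∈ Finset.univ.erase i, ∑ ℓ ∈ S.filter (Pm j), W ℓ ≤ E * D := by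
    intro j hj
    have hji : j ≠ i := (Finset.mem_erase.1 hj).1
    rcases Finset.eq_empty_or_nonempty (S.filter (Pm j)) with hemp | ⟨ℓ₀, hℓ₀⟩
    · rw [hemp, Finset.sum_empty]; positivity
    · have hℓ₀S := (Finset.mem_filter.1 hℓ₀).1
      obtain ⟨hsum₀, hu₀, hv₀⟩ := (Finset.mem_filter.1 hℓ₀).2
      have hbox₀ := hbox ℓ₀ hℓ₀S
      have hmiR : (1:ℝ) ≤ (m i:ℝ) := by
        have h2 : (0:ℝ) ≤ (ℓ₀ i:ℝ) := Nat.cast_nonneg _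
        linarith [hv₀, ha0, hcm_le i, hr1R]
      set A : ℝ := c i * (1 - c i) * (m i) with hA
      have hA0 : 0 < A := by
        have := (hc i).1; have := (hc i).2
        have h01 : (0:ℝ) < 1 - c i := by linarith
        rw [hA]; positivity
      have hAm : A ≤ (m i:ℝ) := by
        have h4 : c i * (1 - c i) ≤ 1 := by nlinarith [sq_nonneg (c i - 1/2)]
        have h5 := mul_le_mul_of_nonneg_right h4 (le_trans zero_le_one hmiR)
        rw [hA]; linarith
      -- a + r ≤ n - m i
      have hesum := esum ℓ₀ hsum₀
      have hterm : ∀ j' ∈ Finset.univ.erase i, -((m j':ℕ):ℝ) ≤ (c j' * (m j') - (ℓ₀ j':ℝ)) := by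
        intro j' _
        have h0 : (ℓ₀ j':ℝ) ≤ ((m j':ℕ):ℝ) := by exact_mod_cast hbox₀ j'
        linarith [hmc j']
      have hsum_m : ∑ j' ∈ Finset.univ.erase i, (-((m j':ℕ):ℝ)) = -((n:ℝ) - (m i:ℝ)) := by
        rw [Finset.sum_neg_distrib, Finset.sum_erase_eq_sub (Finset.mem_univ i)]
        have : ∑ j', ((m j':ℕ):ℝ) = (n:ℝ) := by rw [hn]; push_cast; ring
        rw [this]
      have hani : a + r ≤ (n:ℝ) - (m i:ℝ) := by
        have h1 := Finset.sum_le_sum hterm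
        rw [hesum, hsum_m] at h1
        linarith [hv₀]
      have hnm : (m i : ℝ) ≤ (n:ℝ) := by linarith [hani, ha0, hr1R]
      have hn0 : (0:ℝ) < (n:ℝ) := by linarith
      have han : A + a ≤ (n:ℝ) := by linarith
      have h1an : (0:ℝ) < 1 - a/(n:ℝ) := by
        rw [sub_pos, div_lt_one hn0]; linarith
      have hexp : Real.exp (a/(n:ℝ)) ≤ 1 + a/A := by
        have h := Real.add_one_le_exp (-(a/(n:ℝ)))
        rw [Real.exp_neg] at h
        have hepos : (0:ℝ) < Real.exp (a/(n:ℝ)) := Real.exp_pos _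
        have h2 : 1 - a/(n:ℝ) ≤ (Real.exp (a/(n:ℝ)))⁻¹ := by linarith
        have h3 : Real.exp (a/(n:ℝ)) ≤ (1 - a/(n:ℝ))⁻¹ := by
          rw [← inv_inv (Real.exp (a/(n:ℝ)))]
          exact inv_anti₀ h1an h2
        refine le_trans h3 ?_
        rw [← one_div, div_le_iff₀ h1an]
        have hkey : (1 + a/A) * (1 - a/(n:ℝ)) - 1 = a * ((n:ℝ) - A - a) / (A * (n:ℝ)) := by
          field_simp
          ring
        nlinarith [div_nonneg (mul_nonneg ha0 (by linarith : (0:ℝ) ≤ (n:ℝ) - A - a))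
          (mul_nonneg hA0.le hn0.le), hkey]
      have htb := tail_bound m p c hp hc hsys k r hr j i hji (0:ℝ) a le_rfl ha0
      have hzero : (0:ℝ)/(c j * (1 - c j) * (m j)) = 0 := zero_div _
      rw [hzero, add_zero, one_mul] at htb
      have hpow : Real.exp (((M:ℝ)-1) * (r:ℝ)^2 / (n:ℝ)) ≤ (1 + a/A)^r := by
        have h1 : Real.exp (((M:ℝ)-1) * (r:ℝ)^2 / (n:ℝ)) = (Real.exp (a/(n:ℝ)))^r := by
          rw [← Real.exp_nat_mul]
          congr 1
          rw [ha]; ring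
        rw [h1]
        exact pow_le_pow_left₀ (Real.exp_pos _).le hexp r
      have hwp0 : 0 ≤ ∑ ℓ ∈ S.filter (Pm j), W ℓ :=
        Finset.sum_nonneg (fun ℓ _ => hWnn ℓ)
      have hfin : (∑ ℓ ∈ S.filter (Pm j), W ℓ) * Real.exp (((M:ℝ)-1) * (r:ℝ)^2 / (n:ℝ)) ≤ D := by
        calc (∑ ℓ ∈ S.filter (Pm j), W ℓ) * Real.exp (((M:ℝ)-1) * (r:ℝ)^2 / (n:ℝ))
            ≤ (∑ ℓ ∈ S.filter (Pm j), W ℓ) * (1 + a/A)^r :=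
              mul_le_mul_of_nonneg_left hpow hwp0
          _ = (1 + a/A)^r * ∑ ℓ ∈ S.filter (Pm j), W ℓ := by ring
          _ ≤ D := htb
      have hexppos : (0:ℝ) < Real.exp (((M:ℝ)-1) * (r:ℝ)^2 / (n:ℝ)) := Real.exp_pos _
      calc ∑ ℓ ∈ S.filter (Pm j), W ℓ
          ≤ D / Real.exp (((M:ℝ)-1) * (r:ℝ)^2 / (n:ℝ)) := (le_div_iff₀ hexppos).2 hfin
        _ = E * D := by
            rw [hE, Real.exp_neg, inv_mul_eq_div]
  -- final assembly
  rw [div_le_iff₀ hpos, hDeq]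
  have hNeq : jointPr m p (fun ℓ => (M : ℝ) * r ≤ |(ℓ i : ℝ) - c i * (m i : ℝ)| ∧ ∑ j, ℓ j = k)
      = ∑ ℓ ∈ S, (if ((M : ℝ) * r ≤ |(ℓ i : ℝ) - c i * (m i : ℝ)| ∧ ∑ j, ℓ j = k)
          then W ℓ else 0) := by
    rw [jointPr]
    refine Finset.sum_congr rfl fun ℓ _ => ?_
    by_cases h : ((M : ℝ) * r ≤ |(ℓ i : ℝ) - c i * (m i : ℝ)| ∧ ∑ j, ℓ j = k) <;> simp [h, hW]
  rw [hNeq]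
  calc ∑ ℓ ∈ S, (if ((M : ℝ) * r ≤ |(ℓ i : ℝ) - c i * (m i : ℝ)| ∧ ∑ j, ℓ j = k)
          then W ℓ else 0)
      ≤ ∑ ℓ ∈ S, ∑ j ∈ Finset.univ.erase i,
          ((if Pp j ℓ then W ℓ else 0) + (if Pm j ℓ then W ℓ else 0)) :=
        Finset.sum_le_sum pointwise
    _ = ∑ j ∈ Finset.univ.erase i, ∑ ℓ ∈ S,
          ((if Pp j ℓ then W ℓ else 0) + (if Pm j ℓ then W ℓ else 0)) := Finset.sum_comm
    _ = ∑ j ∈ Finset.univ.erase i,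
          ((∑ ℓ ∈ S.filter (Pp j), W ℓ) + (∑ ℓ ∈ S.filter (Pm j), W ℓ)) := by
        refine Finset.sum_congr rfl fun j _ => ?_
        rw [Finset.sum_add_distrib, Finset.sum_filter, Finset.sum_filter]
    _ ≤ ∑ j ∈ Finset.univ.erase i, (E * D + E * D) :=
        Finset.sum_le_sum (fun j hj => add_le_add (tailp j hj) (tailm j hj))
    _ = ((M - 1:ℕ):ℝ) * (E * D + E * D) := by
        rw [Finset.sum_const, hcard, nsmul_eq_mul]
    _ ≤ 2 * M * Real.exp (-((M : ℝ) - 1) * (r : ℝ) ^ 2 / ((n:ℕ) : ℝ)) * D := by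
        have hEE : Real.exp (-((M : ℝ) - 1) * (r : ℝ) ^ 2 / ((n:ℕ) : ℝ)) = E := by
          rw [hE]; congr 1; ring
        rw [hM1cast, hEE]
        nlinarith [hE0, hDpos, hM1R, mul_pos hE0 hDpos]
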